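/- For the d-dimensional Bessel process transition density p_R(t,y,z) = z (z/y)^η t^{-1} e^{-(y²+z²)/(2t)} I_η(yz/t) with η = d/2 - 1, the function z ↦ p_R(t,y,z) is a probability density on (0,∞) for each fixed t > 0 and y > 0: ∫_0^∞ p_R(t,y,z) dz = 1. -/

import Mathlib

open MeasureTheory Real

/-- The modified Bessel function of the first kind `I_η(x)` (for `x > 0`), given by its
series representation. -/
noncomputable def besselI (η x : ℝ) : ℝ :=
  ∑' k : ℕ, (x / 2) ^ (2 * (k : ℝ) + η) / ((Nat.factorial k : ℝ) * Real.Gamma ((k : ℝ) + η + 1))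

/-- The transition density of the `d`-dimensional Bessel process. -/
noncomputable def besselTransitionDensity (η t y z : ℝ) : ℝ :=
  z * (z / y) ^ η * t⁻¹ * Real.exp (-(y ^ 2 + z ^ 2) / (2 * t)) * besselI η (y * z / t)

/-- The `k`-th term of the series defining `p_R(t,y,·)`. -/
noncomputable def besselTerm (η t y : ℝ) (k : ℕ) (z : ℝ) : ℝ :=
  z * (z / y) ^ η * t⁻¹ * Real.exp (-(y ^ 2 + z ^ 2) / (2 * t)) *
    ((y * z / t / 2) ^ (2 * (k : ℝ) + η) /
      ((Nat.factorial k : ℝ) * Real.Gamma ((k : ℝ) + η + 1)))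

/-- Constant in the closed form of `besselTerm`. -/
noncomputable def besselC (η t y : ℝ) (k : ℕ) : ℝ :=
  y ^ (2 * (k : ℝ) + η) / (2 * t) ^ (2 * (k : ℝ) + η) / y ^ η * t⁻¹ *
    Real.exp (-(y ^ 2 / (2 * t))) / ((Nat.factorial k : ℝ) * Real.Gamma ((k : ℝ) + η + 1))

lemma besselTerm_eq (η t y : ℝ) (ht : 0 < t) (hy : 0 < y) (k : ℕ) {z : ℝ} (hz : 0 < z) :
    besselTerm η t y k z =
      besselC η t y k *
        (z ^ (2 * (k : ℝ) + 2 * η + 1) * Real.exp (-(2 * t)⁻¹ * z ^ (2 : ℝ))) := by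
  have h2t : (0 : ℝ) < 2 * t := by linarith
  have hzsq : z ^ (2 : ℝ) = z ^ 2 := by
    rw [show (2 : ℝ) = ((2 : ℕ) : ℝ) by norm_num, Real.rpow_natCast]
  have hsplit : z ^ (2 * (k : ℝ) + 2 * η + 1) =
      z ^ (2 * (k : ℝ) + η) * z ^ η * z := by
    rw [show 2 * (k : ℝ) + 2 * η + 1 = (2 * (k : ℝ) + η) + η + 1 by ring,
      Real.rpow_add hz, Real.rpow_add hz, Real.rpow_one]
  rw [besselTerm, besselC, hzsq, hsplit,
    show y * z / t / 2 = (y * z) / (2 * t) by ring,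
    Real.div_rpow (by positivity) h2t.le, Real.mul_rpow hy.le hz.le,
    Real.div_rpow hz.le hy.le,
    show -(y ^ 2 + z ^ 2) / (2 * t) = -(y ^ 2 / (2 * t)) + -(2 * t)⁻¹ * z ^ 2 by
      field_simp; ring,
    Real.exp_add]
  ring

lemma besselTerm_integral (η t y : ℝ) (hη : -(1 / 2 : ℝ) ≤ η) (ht : 0 < t) (hy : 0 < y)
    (k : ℕ) :
    ∫ z in Set.Ioi (0 : ℝ), besselTerm η t y k z =
      Real.exp (-(y ^ 2 / (2 * t))) * ((y ^ 2 / (2 * t)) ^ k / (Nat.factorial k : ℝ)) := by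
  have h2t : (0 : ℝ) < 2 * t := by linarith
  have hk0 : (0 : ℝ) ≤ (k : ℝ) := Nat.cast_nonneg k
  have hq : (-1 : ℝ) < 2 * (k : ℝ) + 2 * η + 1 := by linarith
  have hb : (0 : ℝ) < (2 * t)⁻¹ := by positivity
  rw [setIntegral_congr_fun measurableSet_Ioi
    (fun z hz => besselTerm_eq η t y ht hy k hz), integral_const_mul,
    integral_rpow_mul_exp_neg_mul_rpow two_pos hq hb]
  rw [show (2 * (k : ℝ) + 2 * η + 1 + 1) / 2 = (k : ℝ) + η + 1 by ring,
    show -(2 * (k : ℝ) + 2 * η + 1 + 1) / 2 = -((k : ℝ) + η + 1) by ring]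
  have hGpos : 0 < Real.Gamma ((k : ℝ) + η + 1) :=
    Real.Gamma_pos_of_pos (by linarith)
  have hinv : ((2 * t)⁻¹ : ℝ) ^ (-((k : ℝ) + η + 1)) = (2 * t) ^ ((k : ℝ) + η + 1) := by
    rw [Real.inv_rpow h2t.le, Real.rpow_neg h2t.le, inv_inv]
  rw [hinv, besselC]
  have e1 : y ^ (2 * (k : ℝ) + η) = (y ^ 2) ^ k * y ^ η := by
    rw [Real.rpow_add hy, show 2 * (k : ℝ) = ((2 * k : ℕ) : ℝ) by push_cast; ring,
      Real.rpow_natCast, pow_mul]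
  have e2 : (2 * t) ^ (2 * (k : ℝ) + η) = ((2 * t) ^ 2) ^ k * (2 * t) ^ η := by
    rw [Real.rpow_add h2t, show 2 * (k : ℝ) = ((2 * k : ℕ) : ℝ) by push_cast; ring,
      Real.rpow_natCast, pow_mul]
  have e3 : (2 * t) ^ ((k : ℝ) + η + 1) = (2 * t) ^ k * (2 * t) ^ η * (2 * t) := by
    rw [Real.rpow_add h2t, Real.rpow_add h2t, Real.rpow_one, Real.rpow_natCast]
  rw [e1, e2, e3]
  have hyη : y ^ η ≠ 0 := (Real.rpow_pos_of_pos hy η).ne'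
  have h2tη : (2 * t) ^ η ≠ 0 := (Real.rpow_pos_of_pos h2t η).ne'
  have h2tk : ((2 * t) ^ k : ℝ) ≠ 0 := pow_ne_zero k h2t.ne'
  have hfac : ((Nat.factorial k : ℝ)) ≠ 0 := Nat.cast_ne_zero.mpr (Nat.factorial_ne_zero k)
  field_simp
  ring_nf
  rw [show (4:ℝ) ^ k = 2 ^ k * 2 ^ k by rw [← mul_pow]; norm_num, inv_pow, one_div, inv_pow,
    pow_mul]
  field_simp
  ring

theorem besselTransitionDensity_integral_eq_one' (η t y : ℝ) (hη : -(1 / 2 : ℝ) ≤ η)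
    (ht : 0 < t) (hy : 0 < y) :
    ∫ z in Set.Ioi (0 : ℝ), besselTransitionDensity η t y z = 1 := by
  have h2t : (0 : ℝ) < 2 * t := by linarith
  set c : ℝ := y ^ 2 / (2 * t) with hc
  have hcpos : 0 < c := by positivity
  -- measurability of each term
  have hmeas : ∀ k : ℕ, AEStronglyMeasurable (besselTerm η t y k)
      (volume.restrict (Set.Ioi (0 : ℝ))) := by
    intro k
    have hcont : ContinuousOn (besselTerm η t y k) (Set.Ioi 0) := by
      apply ContinuousOn.mul
      apply ContinuousOn.mul
      apply ContinuousOn.mul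
      apply ContinuousOn.mul
      · exact continuousOn_id
      · exact ContinuousOn.rpow_const (continuousOn_id.div_const y)
          (fun z hz => Or.inl (by have : (0:ℝ) < z := hz; positivity))
      · exact continuousOn_const
      · exact (Real.continuous_exp.comp (by continuity)).continuousOn
      · apply ContinuousOn.div_const
        exact ContinuousOn.rpow_const (by fun_prop)
          (fun z hz => Or.inl (by have : (0:ℝ) < z := hz; positivity))
    exact hcont.aestronglyMeasurable measurableSet_Ioi
  -- nonnegativity
  have hnn : ∀ k : ℕ, ∀ z ∈ Set.Ioi (0 : ℝ), 0 ≤ besselTerm η t y k z := by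
    intro k z hz
    have hz' : (0 : ℝ) < z := hz
    have hG : 0 < Real.Gamma ((k : ℝ) + η + 1) :=
      Real.Gamma_pos_of_pos (by have := Nat.cast_nonneg (α := ℝ) k; linarith)
    unfold besselTerm
    positivity
  -- integrability
  have hInt : ∀ k : ℕ, IntegrableOn (besselTerm η t y k) (Set.Ioi 0) := by
    intro k
    have hq : (-1 : ℝ) < 2 * (k : ℝ) + 2 * η + 1 := by
      have := Nat.cast_nonneg (α := ℝ) k; linarith
    have hb : (0 : ℝ) < (2 * t)⁻¹ := by positivity
    have base := (integrableOn_rpow_mul_exp_neg_mul_rpow hq two_pos hb).const_mul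
      (besselC η t y k)
    exact MeasureTheory.IntegrableOn.congr_fun base
      (fun z hz => (besselTerm_eq η t y ht hy k hz).symm) measurableSet_Ioi
  have hval : ∀ k : ℕ, ∫ z in Set.Ioi (0 : ℝ), besselTerm η t y k z =
      Real.exp (-c) * (c ^ k / (Nat.factorial k : ℝ)) :=
    fun k => besselTerm_integral η t y hη ht hy k
  have hsum : Summable (fun k : ℕ => Real.exp (-c) * (c ^ k / (Nat.factorial k : ℝ))) :=
    (Real.summable_pow_div_factorial c).mul_left _
  have hexp : (∑' k : ℕ, Real.exp (-c) * (c ^ k / (Nat.factorial k : ℝ))) = 1 := by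
    rw [tsum_mul_left,
      show (∑' k : ℕ, c ^ k / (Nat.factorial k : ℝ)) = Real.exp c by
        rw [Real.exp_eq_exp_ℝ, NormedSpace.exp_eq_tsum_div],
      ← Real.exp_add]
    simp
  calc ∫ z in Set.Ioi (0 : ℝ), besselTransitionDensity η t y z
      = ∫ z in Set.Ioi (0 : ℝ), ∑' k : ℕ, besselTerm η t y k z := by
        refine setIntegral_congr_fun measurableSet_Ioi (fun z hz => ?_)
        simp only [besselTransitionDensity, besselI, besselTerm]
        exact (tsum_mul_left).symm
    _ = ∑' k : ℕ, ∫ z in Set.Ioi (0 : ℝ), besselTerm η t y k z := by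
        refine integral_tsum hmeas ?_
        have : ∀ k : ℕ, ∫⁻ z, ‖besselTerm η t y k z‖ₑ ∂(volume.restrict (Set.Ioi 0)) =
            ENNReal.ofReal (Real.exp (-c) * (c ^ k / (Nat.factorial k : ℝ))) := by
          intro k
          have hae : 0 ≤ᵐ[volume.restrict (Set.Ioi (0:ℝ))] besselTerm η t y k :=
            (ae_restrict_iff' measurableSet_Ioi).mpr (.of_forall (hnn k))
          calc ∫⁻ z, ‖besselTerm η t y k z‖ₑ ∂(volume.restrict (Set.Ioi 0))
              = ∫⁻ z, ENNReal.ofReal (besselTerm η t y k z)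
                  ∂(volume.restrict (Set.Ioi 0)) :=
                lintegral_congr_ae (hae.mono fun z hz => Real.enorm_eq_ofReal hz)
            _ = ENNReal.ofReal (∫ z in Set.Ioi (0:ℝ), besselTerm η t y k z) :=
                (ofReal_integral_eq_lintegral_ofReal (hInt k) hae).symm
            _ = ENNReal.ofReal (Real.exp (-c) * (c ^ k / (Nat.factorial k : ℝ))) := by
                rw [hval k]
        simp_rw [this]
        rw [← ENNReal.ofReal_tsum_of_nonneg (fun k => by positivity) hsum]
        exact ENNReal.ofReal_ne_top
    _ = 1 := by simp_rw [hval]; exact hexp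

/-- For each `t > 0` and `y > 0`, `z ↦ p_R(t,y,z)` is a probability density on `(0,∞)`. -/
theorem besselTransitionDensity_integral_eq_one (d : ℕ) (hd : 1 ≤ d) (t y : ℝ)
    (ht : 0 < t) (hy : 0 < y) :
    ∫ z in Set.Ioi (0 : ℝ), besselTransitionDensity ((d : ℝ) / 2 - 1) t y z = 1 := by
  have hd' : (1 : ℝ) ≤ d := by exact_mod_cast hd
  exact besselTransitionDensity_integral_eq_one' _ t y (by linarith) ht hy
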